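/- Let B > 0 be a real budget, T ∈ ℕ a deadline, w₀ ∈ ℕ a minimum viable run length (w₀ ≥ 1), and v : ℕ → ℝ with v(0) = 0, v increasing, and discretely concave (Δ(w) := v(w) − v(w−1) nonincreasing in w ≥ 1). For a price P > 0 define U(P) = min(⌊B/P⌋, T), define h(P) as the largest m ∈ ℕ such that Δ(w) ≥ P for all 1 ≤ w ≤ m (with h(P) = 0 if Δ(1) < P; assume Δ(w) < P' for some w so these maxima are finite), and define the chosen hours w*(P) = 0 if ⌊B/P⌋ < w₀ or max_{w ∈ {w₀,…,U(P)}} (v(w) − P·w) ≤ 0, and w*(P) = min(⌊B/P⌋, max(w₀, h(P))) otherwise. Then for all 0 < P' < P: ⌊B/P'⌋ ≥ ⌊B/P⌋, h(P') ≥ h(P), w*(P') ≥ w*(P), and w*(P) > 0 implies w*(P') > 0. Thus a lower price weakly increases both the probability of submission and the chosen job length. -/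
import Mathlib


open scoped Classical

/-- Discrete marginal gain `Δ(w) = v(w) - v(w-1)`. -/
noncomputable def margGain (v : ℕ → ℝ) (w : ℕ) : ℝ := v w - v (w - 1)

/-- `h(P)`: the largest `m` such that `Δ(w) ≥ P` for all `1 ≤ w ≤ m`
(equal to `0` if `Δ(1) < P`). -/
noncomputable def hCount (v : ℕ → ℝ) (P : ℝ) : ℕ :=
  sSup {m : ℕ | ∀ w : ℕ, 1 ≤ w → w ≤ m → P ≤ margGain v w}

/-- `⌊B/P⌋`. -/
noncomputable def floorHours (B P : ℝ) : ℕ := ⌊B / P⌋₊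

/-- `U(P) = min(⌊B/P⌋, T)`. -/
noncomputable def maxHours (B : ℝ) (T : ℕ) (P : ℝ) : ℕ := min (floorHours B P) T

/-- The chosen hours `w*(P)`. -/
noncomputable def chosenHours (B : ℝ) (T w₀ : ℕ) (v : ℕ → ℝ) (P : ℝ) : ℕ :=
  if floorHours B P < w₀ ∨ ∀ w ∈ Finset.Icc w₀ (maxHours B T P), v w - P * (w : ℝ) ≤ 0
  then 0
  else min (floorHours B P) (max w₀ (hCount v P))

/-- monotone comparative statics for a single user. A lower price
weakly increases the budget-feasible hours, the price-clearing marginal count,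
the chosen job length, and the event of submission. -/
theorem user_monotone_comparative_statics
    (B : ℝ) (T w₀ : ℕ) (v : ℕ → ℝ) (P P' : ℝ)
    (hB : 0 < B) (hw₀ : 1 ≤ w₀) (hv0 : v 0 = 0) (hvmono : StrictMono v)
    (hconc : ∀ w : ℕ, 1 ≤ w → margGain v (w + 1) ≤ margGain v w)
    (hfin : ∃ w : ℕ, 1 ≤ w ∧ margGain v w < P')
    (hP' : 0 < P') (hPP : P' < P) :
    floorHours B P ≤ floorHours B P' ∧
    hCount v P ≤ hCount v P' ∧
    chosenHours B T w₀ v P ≤ chosenHours B T w₀ v P' ∧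
    (0 < chosenHours B T w₀ v P → 0 < chosenHours B T w₀ v P') := by

  -- Part 1: floor monotone
  have hPpos : 0 < P := hP'.trans hPP
  have hfloor : floorHours B P ≤ floorHours B P' := by
    apply Nat.floor_le_floor
    exact div_le_div_of_nonneg_left hB.le hP' hPP.le
  -- Part 2: hCount monotone
  have hsub : {m : ℕ | ∀ w : ℕ, 1 ≤ w → w ≤ m → P ≤ margGain v w} ⊆
      {m : ℕ | ∀ w : ℕ, 1 ≤ w → w ≤ m → P' ≤ margGain v w} := by
    intro m hm w h1 h2
    exact le_trans hPP.le (hm w h1 h2)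
  have hbdd : BddAbove {m : ℕ | ∀ w : ℕ, 1 ≤ w → w ≤ m → P' ≤ margGain v w} := by
    obtain ⟨w, hw1, hwlt⟩ := hfin
    refine ⟨w, fun m hm => ?_⟩
    by_contra hcon
    push_neg at hcon
    exact absurd (hm w hw1 hcon.le) (not_le.mpr hwlt)
  have hne : (0 : ℕ) ∈ {m : ℕ | ∀ w : ℕ, 1 ≤ w → w ≤ m → P ≤ margGain v w} := by
    intro w h1 h2; omega
  have hh : hCount v P ≤ hCount v P' :=
    csSup_le_csSup hbdd ⟨0, hne⟩ hsub
  -- Part 3: chosen hours monotone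
  have hchosen : chosenHours B T w₀ v P ≤ chosenHours B T w₀ v P' := by
    unfold chosenHours
    by_cases hc : floorHours B P < w₀ ∨
        ∀ w ∈ Finset.Icc w₀ (maxHours B T P), v w - P * (w : ℝ) ≤ 0
    · rw [if_pos hc]; exact Nat.zero_le _
    · push_neg at hc
      obtain ⟨hfw, w, hwmem, hwpos⟩ := hc
      have hnotc' : ¬ (floorHours B P' < w₀ ∨
          ∀ w ∈ Finset.Icc w₀ (maxHours B T P'), v w - P' * (w : ℝ) ≤ 0) := by
        push_neg
        constructor
        · exact le_trans hfw hfloor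
        · refine ⟨w, ?_, ?_⟩
          · simp only [Finset.mem_Icc, maxHours] at hwmem ⊢
            exact ⟨hwmem.1, le_trans hwmem.2 (min_le_min hfloor le_rfl)⟩
          · simp only [Finset.mem_Icc] at hwmem
            have hwge : (1 : ℝ) ≤ (w : ℝ) := by
              exact_mod_cast le_trans hw₀ hwmem.1
            have : P' * (w : ℝ) ≤ P * (w : ℝ) := by
              apply mul_le_mul_of_nonneg_right hPP.le
              linarith
            linarith
      have hnotc : ¬ (floorHours B P < w₀ ∨
          ∀ w ∈ Finset.Icc w₀ (maxHours B T P), v w - P * (w : ℝ) ≤ 0) := by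
        push_neg
        exact ⟨hfw, ⟨w, hwmem, hwpos⟩⟩
      rw [if_neg hnotc, if_neg hnotc']
      exact le_min (min_le_of_left_le hfloor)
        (min_le_of_right_le (max_le_max le_rfl hh))
  refine ⟨hfloor, hh, hchosen, fun hpos => lt_of_lt_of_le hpos hchosen⟩
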